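/- Let a_n = Σ_{k=0}^n C(n,k)^2·C(n+k,k)^2 be the Apéry numbers, let α be an integer, and define v_n(α) = Σ_{k=0}^n C(n,k)·(-α)^{n-k}·a_k. Then the sequence (v_n(α))_{n≥0} satisfies the Gauss congruences: for every prime p and all positive integers n and r, v_{n·p^r}(α) ≡ v_{n·p^{r-1}}(α) (mod p^r). -/

import Mathlib

/-- The Apéry numbers `aₙ = ∑ₖ C(n,k)² C(n+k,k)²`. -/
def apery (n : ℕ) : ℤ :=
  ∑ k ∈ Finset.range (n + 1), (n.choose k : ℤ) ^ 2 * ((n + k).choose k : ℤ) ^ 2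

/-- The binomial transform of an integer sequence `u` at `α`. -/
def binomialTransform (u : ℕ → ℤ) (α : ℤ) (n : ℕ) : ℤ :=
  ∑ k ∈ Finset.range (n + 1), (n.choose k : ℤ) * (-α) ^ (n - k) * u k

namespace AperyGauss

open MvPolynomial Finset

noncomputable section

/-- exponent vector (a,b,c) in `Fin 3 →₀ ℕ`. -/
def e (a b c : ℕ) : Fin 3 →₀ ℕ :=
  Finsupp.single 0 a + Finsupp.single 1 b + Finsupp.single 2 c

lemma e_apply0 (a b c : ℕ) : e a b c 0 = a := by
  simp [e, Finsupp.single_apply]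

lemma e_apply1 (a b c : ℕ) : e a b c 1 = b := by
  simp [e, Finsupp.single_apply]

lemma e_apply2 (a b c : ℕ) : e a b c 2 = c := by
  simp [e, Finsupp.single_apply]

lemma e_add (a b c a' b' c' : ℕ) :
    e a b c + e a' b' c' = e (a + a') (b + b') (c + c') := by
  simp only [e, Finsupp.single_add]
  abel

lemma e_eq_iff {a b c a' b' c' : ℕ} :
    e a b c = e a' b' c' ↔ a = a' ∧ b = b' ∧ c = c' := by
  constructor
  · intro h
    refine ⟨?_, ?_, ?_⟩
    · have := DFunLike.congr_fun h 0
      simpa [e_apply0] using this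
    · have := DFunLike.congr_fun h 1
      simpa [e_apply1] using this
    · have := DFunLike.congr_fun h 2
      simpa [e_apply2] using this
  · rintro ⟨rfl, rfl, rfl⟩; rfl

lemma e_smul (k a b c : ℕ) : k • e a b c = e (k * a) (k * b) (k * c) := by
  simp only [e, smul_add, Finsupp.smul_single, smul_eq_mul]

lemma X_pow_eq (i : Fin 3) (j : ℕ) :
    (X i : MvPolynomial (Fin 3) ℤ) ^ j = monomial (Finsupp.single i j) 1 := by
  rw [X, monomial_pow, one_pow, Finsupp.smul_single, smul_eq_mul, mul_one]

lemma monomial_e_eq {a b c : ℕ} (r : ℤ) :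
    (monomial (e a b c) r : MvPolynomial (Fin 3) ℤ) = C r * (X 0 ^ a * X 1 ^ b * X 2 ^ c) := by
  rw [X_pow_eq, X_pow_eq, X_pow_eq, monomial_mul, monomial_mul, C_mul_monomial]
  simp [e]

lemma one_add_X_pow (i : Fin 3) (m : ℕ) :
    ((1 + X i : MvPolynomial (Fin 3) ℤ)) ^ m
      = ∑ j ∈ range (m + 1), monomial (Finsupp.single i j) ((m.choose j : ℤ)) := by
  rw [add_comm, add_pow]
  refine Finset.sum_congr rfl fun j _ => ?_
  rw [X_pow_eq, one_pow, mul_one]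
  rw [show ((m.choose j : MvPolynomial (Fin 3) ℤ)) = C ((m.choose j : ℤ)) by simp]
  rw [mul_comm, C_mul_monomial, mul_one]

lemma sum_choose_ite (m a : ℕ) :
    (∑ j ∈ range (m + 1), if j = a then (m.choose j : ℤ) else 0) = (m.choose a : ℤ) := by
  rw [Finset.sum_ite_eq' (range (m + 1)) a (fun j => (m.choose j : ℤ))]
  by_cases h : a ∈ range (m + 1)
  · rw [if_pos h]
  · rw [if_neg h]
    rw [mem_range, not_lt] at h
    rw [Nat.choose_eq_zero_of_lt h]
    simp

lemma triple_prod_eq (m0 m1 m2 : ℕ) :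
    ((1 + X 0) ^ m0 * (1 + X 1) ^ m1 * (1 + X 2) ^ m2 : MvPolynomial (Fin 3) ℤ)
      = ∑ j0 ∈ range (m0 + 1), ∑ j1 ∈ range (m1 + 1), ∑ j2 ∈ range (m2 + 1),
          monomial (e j0 j1 j2) ((m0.choose j0 : ℤ) * (m1.choose j1) * (m2.choose j2)) := by
  rw [one_add_X_pow 0, one_add_X_pow 1, one_add_X_pow 2]
  rw [Finset.sum_mul_sum]
  rw [Finset.sum_mul]
  refine Finset.sum_congr rfl fun j0 _ => ?_
  rw [Finset.sum_mul]
  refine Finset.sum_congr rfl fun j1 _ => ?_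
  rw [Finset.mul_sum]
  refine Finset.sum_congr rfl fun j2 _ => ?_
  rw [monomial_mul, monomial_mul]
  simp [e]

lemma coeff_triple_prod {a b c : ℕ} (m0 m1 m2 : ℕ) :
    coeff (e a b c) ((1 + X 0) ^ m0 * (1 + X 1) ^ m1 * (1 + X 2) ^ m2 : MvPolynomial (Fin 3) ℤ)
      = (m0.choose a : ℤ) * (m1.choose b) * (m2.choose c) := by
  rw [triple_prod_eq]
  rw [coeff_sum]
  have h1 : ∀ j0, coeff (e a b c) (∑ j1 ∈ range (m1 + 1), ∑ j2 ∈ range (m2 + 1),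
      (monomial (e j0 j1 j2) ((m0.choose j0 : ℤ) * (m1.choose j1) * (m2.choose j2))
        : MvPolynomial (Fin 3) ℤ))
      = ∑ j1 ∈ range (m1 + 1), ∑ j2 ∈ range (m2 + 1),
          (if j0 = a then (m0.choose j0 : ℤ) else 0) * (if j1 = b then (m1.choose j1 : ℤ) else 0)
            * (if j2 = c then (m2.choose j2 : ℤ) else 0) := by
    intro j0
    rw [coeff_sum]
    refine Finset.sum_congr rfl fun j1 _ => ?_
    rw [coeff_sum]
    refine Finset.sum_congr rfl fun j2 _ => ?_
    rw [coeff_monomial]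
    by_cases h0 : j0 = a <;> by_cases h1 : j1 = b <;> by_cases h2 : j2 = c <;>
      simp [e_eq_iff, h0, h1, h2]
  rw [Finset.sum_congr rfl fun j0 _ => h1 j0]
  simp only [← Finset.sum_mul, ← Finset.mul_sum]
  rw [sum_choose_ite, sum_choose_ite, sum_choose_ite]

/-- The Straub-type polynomial whose diagonal coefficients are the Apéry numbers. -/
def P : MvPolynomial (Fin 3) ℤ :=
  (1 + X 0) * (1 + X 1) * (1 + X 2) * (X 0 * ((1 + X 1) * (1 + X 2)) + X 1 * X 2)

lemma P_pow (n : ℕ) :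
    P ^ n = ∑ k ∈ range (n + 1),
      monomial (e k (n - k) (n - k)) ((n.choose k : ℤ)) *
        ((1 + X 0) ^ n * (1 + X 1) ^ (n + k) * (1 + X 2) ^ (n + k)) := by
  have hinner : (X 0 * ((1 + X 1) * (1 + X 2)) + X 1 * X 2 : MvPolynomial (Fin 3) ℤ) ^ n
      = ∑ k ∈ range (n + 1),
          (X 0 * ((1 + X 1) * (1 + X 2))) ^ k * (X 1 * X 2) ^ (n - k) *
            ((n.choose k : ℕ) : MvPolynomial (Fin 3) ℤ) :=
    add_pow ..
  rw [P, mul_pow, mul_pow, mul_pow, hinner, Finset.mul_sum]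
  refine Finset.sum_congr rfl fun k hk => ?_
  rw [mem_range] at hk
  rw [monomial_e_eq, show ((n.choose k : MvPolynomial (Fin 3) ℤ)) = C ((n.choose k : ℤ)) by simp,
    pow_add, pow_add, mul_pow, mul_pow, mul_pow]
  ring

lemma coeff_P_pow (n : ℕ) : coeff (e n n n) (P ^ n) = apery n := by
  rw [P_pow, coeff_sum, apery]
  refine Finset.sum_congr rfl fun k hk => ?_
  rw [mem_range, Nat.lt_succ_iff] at hk
  have hsplit : e n n n = e k (n - k) (n - k) + e (n - k) k k := by
    rw [e_add]; congr 1 <;> omega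
  rw [hsplit, coeff_monomial_mul, coeff_triple_prod, Nat.choose_symm hk]
  ring

/-- The shifted polynomial computing the binomial transform. -/
def Qp (α : ℤ) : MvPolynomial (Fin 3) ℤ := P - C α * monomial (e 1 1 1) 1

lemma coeff_Q_pow (α : ℤ) (m : ℕ) :
    coeff (e m m m) ((Qp α) ^ m) = binomialTransform apery α m := by
  have hq : Qp α = P + C (-α) * monomial (e 1 1 1) 1 := by
    rw [Qp, map_neg, sub_eq_add_neg, neg_mul]
  rw [hq, add_pow, coeff_sum, binomialTransform]
  refine Finset.sum_congr rfl fun k hk => ?_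
  rw [mem_range, Nat.lt_succ_iff] at hk
  have hy : (C (-α) * monomial (e 1 1 1) 1 : MvPolynomial (Fin 3) ℤ) ^ (m - k)
      = C ((-α) ^ (m - k)) * monomial (e (m - k) (m - k) (m - k)) 1 := by
    rw [mul_pow, ← map_pow, monomial_pow, one_pow, e_smul, mul_one]
  rw [hy, show ((m.choose k : MvPolynomial (Fin 3) ℤ)) = C ((m.choose k : ℤ)) by simp]
  have hrearr : P ^ k * (C ((-α) ^ (m - k)) * monomial (e (m - k) (m - k) (m - k)) 1)
        * C ((m.choose k : ℤ))
      = C ((m.choose k : ℤ) * (-α) ^ (m - k))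
          * (P ^ k * monomial (e (m - k) (m - k) (m - k)) 1) := by
    rw [map_mul]; ring
  rw [hrearr, coeff_C_mul,
    show e m m m = e k k k + e (m - k) (m - k) (m - k) by rw [e_add]; congr 1 <;> omega,
    coeff_mul_monomial, mul_one, coeff_P_pow]

variable {σ : Type*}

lemma expand_monomial_smul (p : ℕ) (hp : p ≠ 0) (d : σ →₀ ℕ) (r : ℤ) :
    expand p (monomial d r : MvPolynomial σ ℤ) = monomial (p • d) r := by
  rw [expand_monomial, monomial_eq]

lemma coeff_expand_smul (p : ℕ) (hp : p ≠ 0) (F : MvPolynomial σ ℤ) (d : σ →₀ ℕ) :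
    coeff (p • d) (expand p F) = coeff d F := by
  classical
  conv_lhs => rw [F.as_sum]
  rw [map_sum]
  rw [Finset.sum_congr rfl fun v _ => expand_monomial_smul p hp v (coeff v F)]
  rw [coeff_sum]
  have : ∀ v ∈ F.support, coeff (p • d) (monomial (p • v) (coeff v F) : MvPolynomial σ ℤ)
      = if v = d then coeff v F else 0 := by
    intro v _
    rw [coeff_monomial]
    congr 1
    simp only [eq_iff_iff]
    constructor
    · intro h
      ext i
      have := DFunLike.congr_fun h i
      simp only [Finsupp.smul_apply, smul_eq_mul] at this
      exact Nat.eq_of_mul_eq_mul_left (Nat.pos_of_ne_zero hp) this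
    · rintro rfl; rfl
  rw [Finset.sum_congr rfl this, Finset.sum_ite_eq' F.support d (fun v => coeff v F)]
  by_cases h : d ∈ F.support
  · rw [if_pos h]
  · rw [if_neg h, eq_comm]
    simpa using MvPolynomial.notMem_support_iff.mp h

lemma expand_eq_pow_char (p : ℕ) [Fact p.Prime] (f : MvPolynomial σ (ZMod p)) :
    expand p f = f ^ p := by
  induction f using MvPolynomial.induction_on with
  | C a => rw [expand_C, ← map_pow, ZMod.pow_card]
  | add f g hf hg => rw [map_add, hf, hg, add_pow_char]
  | mul_X f i hf => rw [map_mul, hf, expand_X, mul_pow]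

lemma exists_frob_lift (p : ℕ) (hp : p.Prime) (Q : MvPolynomial σ ℤ) :
    ∃ R : MvPolynomial σ ℤ, Q ^ p = expand p Q + C (p : ℤ) * R := by
  haveI : Fact p.Prime := ⟨hp⟩
  have hdvd : C ((p : ℤ)) ∣ Q ^ p - expand p Q := by
    rw [C_dvd_iff_dvd_coeff]
    intro i
    have hmap : map (Int.castRingHom (ZMod p)) (Q ^ p - expand p Q) = 0 := by
      rw [map_sub, map_pow, map_expand, expand_eq_pow_char, sub_self]
    have := congrArg (coeff i) hmap
    rw [coeff_map, coeff_zero] at this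
    exact_mod_cast (ZMod.intCast_zmod_eq_zero_iff_dvd _ p).mp this
  obtain ⟨R, hR⟩ := hdvd
  exact ⟨R, by linear_combination hR⟩

lemma pow_dvd_choose_mul_pow (p : ℕ) (hp : p.Prime) (m r j : ℕ) (hm0 : 0 < m)
    (hdm : p ^ (r - 1) ∣ m) (hj : 0 < j) :
    p ^ r ∣ m.choose j * p ^ j := by
  rcases Nat.lt_or_ge m j with h | hjm
  · rw [Nat.choose_eq_zero_of_lt h, zero_mul]; exact dvd_zero _
  have hC0 : 0 < m.choose j := Nat.choose_pos hjm
  have hdvd1 : m ∣ j * m.choose j := by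
    obtain ⟨m', rfl⟩ : ∃ m', m = m' + 1 := ⟨m - 1, by omega⟩
    obtain ⟨j', rfl⟩ : ∃ j', j = j' + 1 := ⟨j - 1, by omega⟩
    exact ⟨m'.choose j', by rw [mul_comm]; exact (Nat.add_one_mul_choose_eq m' j').symm⟩
  have hpr : p ^ (r - 1) ∣ j * m.choose j := dvd_trans hdm hdvd1
  set t := j.factorization p with ht
  set fC := (m.choose j).factorization p with hfC
  have hkey : r - 1 ≤ t + fC := by
    have h1 : p ^ (r - 1) ∣ j * m.choose j := hpr
    rw [Nat.Prime.pow_dvd_iff_le_factorization hp (by positivity)] at h1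
    rwa [Nat.factorization_mul (by omega) (by omega), Finsupp.add_apply] at h1
  have htj : t < j := by
    have h1 : p ^ t ∣ j := Nat.ordProj_dvd j p
    have h2 : p ^ t ≤ j := Nat.le_of_dvd hj h1
    have h3 : t < p ^ t := Nat.lt_pow_self hp.one_lt
    omega
  have hgoal : r ≤ fC + j := by omega
  calc p ^ r ∣ p ^ (fC + j) := pow_dvd_pow p hgoal
    _ = p ^ fC * p ^ j := pow_add p fC j
    _ ∣ m.choose j * p ^ j := mul_dvd_mul_right (Nat.ordProj_dvd _ p) _

/-- Gauss congruences for diagonal coefficients of powers of an integer polynomial. -/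
lemma gauss_coeff (p : ℕ) (hp : p.Prime) (Q : MvPolynomial σ ℤ) (v : σ →₀ ℕ)
    (n r : ℕ) (hn : 0 < n) (hr : 0 < r) :
    ((p : ℤ)) ^ r ∣ coeff ((n * p ^ r) • v) (Q ^ (n * p ^ r))
      - coeff ((n * p ^ (r - 1)) • v) (Q ^ (n * p ^ (r - 1))) := by
  classical
  set m := n * p ^ (r - 1) with hm
  have hm0 : 0 < m := Nat.mul_pos hn (Nat.pow_pos hp.pos)
  have hdm : p ^ (r - 1) ∣ m := Dvd.intro_left n rfl
  have hMm : n * p ^ r = m * p := by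
    rw [hm, mul_assoc, ← pow_succ, Nat.sub_add_cancel hr]
  obtain ⟨R, hR⟩ := exists_frob_lift p hp Q
  have hQM : Q ^ (m * p) = (C (p : ℤ) * R + expand p Q) ^ m := by
    rw [mul_comm, pow_mul, hR, add_comm]
  have hsmul : (m * p) • v = p • (m • v) := by
    rw [smul_smul, Nat.mul_comm m p]
  rw [hMm, hQM, hsmul, add_pow, coeff_sum, Finset.sum_range_succ']
  have h0 : coeff (p • (m • v))
      ((C (p : ℤ) * R) ^ 0 * expand p Q ^ (m - 0) * ((m.choose 0 : ℕ) : MvPolynomial σ ℤ))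
      = coeff (m • v) (Q ^ m) := by
    rw [pow_zero, one_mul, Nat.sub_zero, Nat.choose_zero_right, Nat.cast_one, mul_one,
      ← map_pow, coeff_expand_smul p hp.pos.ne']
  rw [h0, add_sub_cancel_right]
  refine Finset.dvd_sum fun j _ => ?_
  have hterm : (C (p : ℤ) * R) ^ (j + 1) * expand p Q ^ (m - (j + 1))
        * ((m.choose (j + 1) : ℕ) : MvPolynomial σ ℤ)
      = C ((p : ℤ) ^ (j + 1) * (m.choose (j + 1) : ℤ))
          * (R ^ (j + 1) * expand p Q ^ (m - (j + 1))) := by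
    rw [mul_pow, ← map_pow, show ((m.choose (j + 1) : ℕ) : MvPolynomial σ ℤ)
      = C ((m.choose (j + 1) : ℤ)) by simp, map_mul]
    ring
  rw [hterm, coeff_C_mul]
  refine Dvd.dvd.mul_right ?_ _
  have := pow_dvd_choose_mul_pow p hp m r (j + 1) hm0 hdm (by omega)
  have hcast : ((p : ℤ)) ^ r ∣ ((m.choose (j + 1) * p ^ (j + 1) : ℕ) : ℤ) := by
    exact_mod_cast Int.natCast_dvd_natCast.mpr this
  push_cast at hcast
  calc ((p : ℤ)) ^ r ∣ (m.choose (j + 1) : ℤ) * (p : ℤ) ^ (j + 1) := hcast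
    _ = (p : ℤ) ^ (j + 1) * (m.choose (j + 1) : ℤ) := by ring

end

end AperyGauss

/-- The binomial transform of the Apéry numbers satisfies the Gauss congruences. -/
theorem apery_binomialTransform_gauss (α : ℤ) :
    ∀ p : ℕ, p.Prime → ∀ n r : ℕ, 0 < n → 0 < r →
      binomialTransform apery α (n * p ^ r) ≡
        binomialTransform apery α (n * p ^ (r - 1)) [ZMOD (p : ℤ) ^ r] := by
  intro p hp n r hn hr
  have h := AperyGauss.gauss_coeff p hp (AperyGauss.Qp α) (AperyGauss.e 1 1 1) n r hn hr
  have key : ∀ m : ℕ, MvPolynomial.coeff (m • AperyGauss.e 1 1 1) (AperyGauss.Qp α ^ m)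
      = binomialTransform apery α m := by
    intro m
    rw [AperyGauss.e_smul, mul_one, AperyGauss.coeff_Q_pow]
  rw [key, key] at h
  rw [Int.modEq_iff_dvd]
  rw [show binomialTransform apery α (n * p ^ (r - 1)) - binomialTransform apery α (n * p ^ r)
    = -(binomialTransform apery α (n * p ^ r) - binomialTransform apery α (n * p ^ (r - 1)))
    by ring]
  exact dvd_neg.mpr h
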